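/- Let the MDP be finite and communicating, let Q ∈ ℝ^{S×A}, and let π be any greedy policy with respect to Q (i.e., for every state s, π selects an action in argmax_a Q(s,a)). Then for every state s: min_{(s',a')} (T(Q)(s',a') − Q(s',a')) ≤ r(π, s) ≤ r* ≤ max_{(s',a')} (T(Q)(s',a') − Q(s',a')); in particular |r* − r(π, s)| ≤ sp(T(Q) − Q), where sp(x) := max x − min x. Consequently, if Q_t → q_∞ where q_∞ satisfies the Bellman optimality equation q_∞ = T(q_∞) − r*·e, and π_t is any greedy policy with respect to Q_t, then r(π_t, s) → r* for every state s. -/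

import Mathlib

open Filter Topology Matrix

/-- A finite Markov decision process with finite state set `S`, finite action set `A`,
finite reward set `R` (embedded in `ℝ` via `rval`), and transition dynamics `p`. -/
structure MDP (S A R : Type*) [Fintype S] [Fintype A] [Fintype R] where
  /-- `p s a s' r` is the probability of transitioning to `s'` with reward `r`
  when taking action `a` in state `s`. -/
  p : S → A → S → R → ℝ
  /-- The real value of each abstract reward. -/
  rval : R → ℝ
  p_nonneg : ∀ s a s' r, 0 ≤ p s a s' r
  p_sum_one : ∀ s a, ∑ s' : S, ∑ r : R, p s a s' r = 1

variable {S A R : Type*} [Fintype S] [Fintype A] [Fintype R] [DecidableEq S]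

/-- A stationary Markov policy: a probability distribution over actions for each state. -/
def IsPolicy (π : S → A → ℝ) : Prop :=
  (∀ s a, 0 ≤ π s a) ∧ ∀ s, ∑ a : A, π s a = 1

/-- Transition matrix of the Markov chain induced by policy `π`. -/
noncomputable def MDP.Pmat (M : MDP S A R) (π : S → A → ℝ) : Matrix S S ℝ :=
  Matrix.of fun s s' => ∑ a : A, ∑ r : R, π s a * M.p s a s' r

/-- Expected one-step reward under policy `π`. -/
noncomputable def MDP.rPi (M : MDP S A R) (π : S → A → ℝ) : S → ℝ :=
  fun s => ∑ a : A, ∑ s' : S, ∑ r : R, π s a * M.p s a s' r * M.rval r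

/-- The reward rate `r(π, s)`: the Cesàro limit of expected rewards starting from `s`,
where `E[R_t | S_0 = s] = (P_π^(t-1) r_π)(s)`. -/
noncomputable def MDP.rewardRate (M : MDP S A R) (π : S → A → ℝ) (s : S) : ℝ :=
  limUnder atTop (fun n : ℕ =>
    (1 / (n : ℝ)) * ∑ t ∈ Finset.range n, ((M.Pmat π ^ t) *ᵥ M.rPi π) s)

/-- The MDP is communicating: every state is reachable from every other state with
positive probability, in finitely many steps, under some policy. -/
def MDP.Communicating (M : MDP S A R) : Prop :=
  ∀ s s' : S, ∃ π : S → A → ℝ, IsPolicy π ∧ ∃ n : ℕ, 0 < n ∧ 0 < (M.Pmat π ^ n) s s'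

/-- The optimal reward rate `r* = sup_{π, s} r(π, s)`. -/
noncomputable def MDP.rStar (M : MDP S A R) : ℝ :=
  sSup {x : ℝ | ∃ π : S → A → ℝ, ∃ s : S, IsPolicy π ∧ x = M.rewardRate π s}

/-- The Bellman optimality operator `T(Q)(s,a) = Σ_{s',r} p(s',r|s,a) (r + max_{a'} Q(s',a'))`. -/
noncomputable def MDP.T [Nonempty A] (M : MDP S A R) (Q : S × A → ℝ) : S × A → ℝ :=
  fun sa => ∑ s' : S, ∑ r : R, M.p sa.1 sa.2 s' r * (M.rval r + ⨆ a' : A, Q (s', a'))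

/-- `Q` solves the average-reward Bellman optimality equation with offset `rbar`. -/
def MDP.BellmanOpt [Nonempty A] (M : MDP S A R) (Q : S × A → ℝ) (rbar : ℝ) : Prop :=
  ∀ s a, Q (s, a) = ∑ s' : S, ∑ r : R,
    M.p s a s' r * (M.rval r - rbar + ⨆ a' : A, Q (s', a'))

/-- `π` is a greedy policy with respect to `Q`: a policy putting positive probability only on
actions maximizing `Q(s, ·)`. -/
def IsGreedy (Q : S × A → ℝ) (π : S → A → ℝ) : Prop :=
  IsPolicy π ∧ ∀ s a, 0 < π s a → ∀ a', Q (s, a') ≤ Q (s, a)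


section Stoch
variable {S : Type*} [Fintype S] [DecidableEq S]


def StochMat (P : Matrix S S ℝ) : Prop := (∀ s s', 0 ≤ P s s') ∧ ∀ s, ∑ s', P s s' = 1

lemma StochMat.pow {P : Matrix S S ℝ} (h : StochMat P) (n : ℕ) : StochMat (P ^ n) := by
  induction n with
  | zero =>
    refine ⟨fun s s' => ?_, fun s => ?_⟩
    · rw [pow_zero, Matrix.one_apply]; split <;> norm_num
    · rw [pow_zero]; simp [Matrix.one_apply]
  | succ n ih =>
    rw [pow_succ]
    refine ⟨fun s s' => ?_, fun s => ?_⟩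
    · rw [Matrix.mul_apply]
      exact Finset.sum_nonneg fun k _ => mul_nonneg (ih.1 s k) (h.1 k s')
    · simp only [Matrix.mul_apply]
      rw [Finset.sum_comm]
      have : ∀ k ∈ Finset.univ, ∑ s' : S, (P ^ n) s k * P k s' = (P ^ n) s k := by
        intro k _
        rw [← Finset.mul_sum, h.2 k, mul_one]
      rw [Finset.sum_congr rfl this, ih.2 s]

lemma StochMat.mulVec_mono {P : Matrix S S ℝ} (h : StochMat P) {x y : S → ℝ}
    (hxy : ∀ s, x s ≤ y s) (s : S) : (P *ᵥ x) s ≤ (P *ᵥ y) s := by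
  simp only [Matrix.mulVec, dotProduct]
  exact Finset.sum_le_sum fun k _ => mul_le_mul_of_nonneg_left (hxy k) (h.1 s k)

lemma StochMat.mulVec_const {P : Matrix S S ℝ} (h : StochMat P) (c : ℝ) (s : S) :
    (P *ᵥ (fun _ => c)) s = c := by
  simp only [Matrix.mulVec, dotProduct]
  rw [← Finset.sum_mul, h.2 s, one_mul]

lemma StochMat.abs_mulVec_le {P : Matrix S S ℝ} (h : StochMat P) (x : S → ℝ) (s : S) :
    |(P *ᵥ x) s| ≤ ‖x‖ := by
  simp only [Matrix.mulVec, dotProduct]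
  calc |∑ k, P s k * x k| ≤ ∑ k, |P s k * x k| := Finset.abs_sum_le_sum_abs _ _
    _ ≤ ∑ k, P s k * ‖x‖ := by
        refine Finset.sum_le_sum fun k _ => ?_
        rw [abs_mul, abs_of_nonneg (h.1 s k)]
        exact mul_le_mul_of_nonneg_left (Real.norm_eq_abs (x k) ▸ norm_le_pi_norm x k) (h.1 s k)
    _ = ‖x‖ := by rw [← Finset.sum_mul, h.2 s, one_mul]

/-- telescoping -/
lemma telescope {P : Matrix S S ℝ} (y : S → ℝ) (n : ℕ) (s : S) :
    ∑ t ∈ Finset.range n, ((P ^ t) *ᵥ (y - P *ᵥ y)) s = y s - ((P ^ n) *ᵥ y) s := by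
  have : ∀ t, ((P ^ t) *ᵥ (y - P *ᵥ y)) s = ((P ^ t) *ᵥ y) s - ((P ^ (t + 1)) *ᵥ y) s := by
    intro t
    rw [Matrix.mulVec_sub, Matrix.mulVec_mulVec, ← pow_succ]
    simp [Pi.sub_apply]
  simp only [this]
  rw [Finset.sum_range_sub' (fun t => ((P ^ t) *ᵥ y) s) n]
  simp [Matrix.one_mulVec]

lemma tendsto_frac_zero {P : Matrix S S ℝ} (h : StochMat P) (y : S → ℝ) (s : S) :
    Tendsto (fun n : ℕ => (1 / (n : ℝ)) * (y s - ((P ^ n) *ᵥ y) s)) atTop (𝓝 0) := by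
  apply squeeze_zero_norm (a := fun n : ℕ => (|y s| + ‖y‖) / n)
  · intro n
    rw [Real.norm_eq_abs, abs_mul, abs_of_nonneg (by positivity : (0:ℝ) ≤ 1 / (n:ℝ)),
      one_div, inv_mul_eq_div]
    gcongr
    calc |y s - ((P ^ n) *ᵥ y) s| ≤ |y s| + |((P ^ n) *ᵥ y) s| := abs_sub _ _
        _ ≤ |y s| + ‖y‖ := add_le_add_right ((h.pow n).abs_mulVec_le y s) _
  · exact tendsto_const_div_atTop_nhds_zero_nat _


lemma ker_fixed {P : Matrix S S ℝ} {x : S → ℝ}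
    (hx : x ∈ LinearMap.ker (LinearMap.id - P.mulVecLin)) (t : ℕ) : (P ^ t) *ᵥ x = x := by
  have hfix : P *ᵥ x = x := by
    have := LinearMap.mem_ker.mp hx
    simp only [LinearMap.sub_apply, LinearMap.id_apply, Matrix.mulVecLin_apply,
      sub_eq_zero] at this
    exact this.symm
  induction t with
  | zero => simp [Matrix.one_mulVec]
  | succ t ih => rw [pow_succ', ← Matrix.mulVec_mulVec, ih, hfix]

lemma range_cesaro {P : Matrix S S ℝ} (h : StochMat P) {w : S → ℝ}
    (hw : w ∈ LinearMap.range (LinearMap.id - P.mulVecLin)) (s : S) :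
    Tendsto (fun n : ℕ => (1 / (n : ℝ)) * ∑ t ∈ Finset.range n, ((P ^ t) *ᵥ w) s)
      atTop (𝓝 0) := by
  obtain ⟨y, hy⟩ := hw
  have hw' : w = y - P *ᵥ y := by
    rw [← hy]; simp [LinearMap.sub_apply, Matrix.mulVecLin_apply]
  have := tendsto_frac_zero h y s
  refine this.congr fun n => ?_
  rw [hw', telescope]

lemma cesaro_exists {P : Matrix S S ℝ} (h : StochMat P) (r : S → ℝ) :
    ∃ u : S → ℝ, ∀ s,
      Tendsto (fun n : ℕ => (1 / (n : ℝ)) * ∑ t ∈ Finset.range n, ((P ^ t) *ᵥ r) s)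
        atTop (𝓝 (u s)) := by
  classical
  set f : (S → ℝ) →ₗ[ℝ] (S → ℝ) := LinearMap.id - P.mulVecLin with hf
  have hdisj : Disjoint (LinearMap.ker f) (LinearMap.range f) := by
    rw [Submodule.disjoint_def]
    intro x hxk hxr
    funext s
    have h1 : Tendsto (fun n : ℕ => (1 / (n : ℝ)) * ∑ t ∈ Finset.range n, ((P ^ t) *ᵥ x) s)
        atTop (𝓝 0) := range_cesaro h hxr s
    have h2 : Tendsto (fun n : ℕ => (1 / (n : ℝ)) * ∑ t ∈ Finset.range n, ((P ^ t) *ᵥ x) s)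
        atTop (𝓝 (x s)) := by
      apply Tendsto.congr' (f₁ := fun _ => x s) ?_ tendsto_const_nhds
      filter_upwards [eventually_ge_atTop 1] with n hn
      have : ∀ t ∈ Finset.range n, ((P ^ t) *ᵥ x) s = x s := fun t _ => by
        rw [ker_fixed hxk t]
      rw [Finset.sum_congr rfl this, Finset.sum_const, Finset.card_range, nsmul_eq_mul,
        ← mul_assoc, one_div, inv_mul_cancel₀ (by positivity : (n:ℝ) ≠ 0), one_mul]
    exact (tendsto_nhds_unique h2 h1)
  have hrank : Module.finrank ℝ (LinearMap.ker f) + Module.finrank ℝ (LinearMap.range f)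
      = Module.finrank ℝ (S → ℝ) := by
    rw [add_comm]; exact LinearMap.finrank_range_add_finrank_ker f
  have htop : LinearMap.ker f ⊔ LinearMap.range f = ⊤ :=
    Submodule.eq_top_of_disjoint _ _ hrank.ge hdisj
  have hmem : r ∈ LinearMap.ker f ⊔ LinearMap.range f := htop ▸ Submodule.mem_top
  obtain ⟨u, hu, w, hw, huw⟩ := Submodule.mem_sup.mp hmem
  refine ⟨u, fun s => ?_⟩
  have hw0 := range_cesaro h hw s
  have hmain : Tendsto (fun n : ℕ => u s +
      (1 / (n : ℝ)) * ∑ t ∈ Finset.range n, ((P ^ t) *ᵥ w) s) atTop (𝓝 (u s)) := by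
    simpa using tendsto_const_nhds.add hw0
  apply hmain.congr'
  filter_upwards [eventually_ge_atTop 1] with n hn
  have hsum : ∑ t ∈ Finset.range n, ((P ^ t) *ᵥ r) s
      = n * u s + ∑ t ∈ Finset.range n, ((P ^ t) *ᵥ w) s := by
    have : ∀ t ∈ Finset.range n, ((P ^ t) *ᵥ r) s = u s + ((P ^ t) *ᵥ w) s := by
      intro t _
      rw [← huw, Matrix.mulVec_add, Pi.add_apply, ker_fixed hu t]
    rw [Finset.sum_congr rfl this, Finset.sum_add_distrib, Finset.sum_const, Finset.card_range,
      nsmul_eq_mul]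
  rw [hsum, mul_add, ← mul_assoc, one_div, inv_mul_cancel₀ (by positivity : (n:ℝ) ≠ 0), one_mul]

lemma key_sum_lower {P : Matrix S S ℝ} (h : StochMat P) {r v : S → ℝ} {c : ℝ}
    (hle : ∀ s, c + (v s - (P *ᵥ v) s) ≤ r s) (n : ℕ) (s : S) :
    (n : ℝ) * c + (v s - ((P ^ n) *ᵥ v) s) ≤ ∑ t ∈ Finset.range n, ((P ^ t) *ᵥ r) s := by
  induction n generalizing s with
  | zero => simp [Matrix.one_mulVec]
  | succ n ih =>
    rw [Finset.sum_range_succ]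
    have h1 : ((P ^ n) *ᵥ (fun s => c + (v s - (P *ᵥ v) s))) s ≤ ((P ^ n) *ᵥ r) s :=
      (h.pow n).mulVec_mono hle s
    have h2 : ((P ^ n) *ᵥ (fun s => c + (v s - (P *ᵥ v) s))) s
        = c + (((P ^ n) *ᵥ v) s - ((P ^ (n + 1)) *ᵥ v) s) := by
      have e1 : (fun s => c + (v s - (P *ᵥ v) s)) = (fun _ => c) + (v - P *ᵥ v) := rfl
      rw [e1, Matrix.mulVec_add, Matrix.mulVec_sub, Matrix.mulVec_mulVec, ← pow_succ]
      simp only [Pi.add_apply, Pi.sub_apply]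
      rw [(h.pow n).mulVec_const]
    have := ih s
    push_cast
    linarith [h2 ▸ h1]

lemma cesaro_lower {P : Matrix S S ℝ} (h : StochMat P) {r v : S → ℝ} {c : ℝ} {u : S → ℝ}
    (hle : ∀ s, c + (v s - (P *ᵥ v) s) ≤ r s)
    (hu : ∀ s, Tendsto (fun n : ℕ => (1 / (n : ℝ)) * ∑ t ∈ Finset.range n, ((P ^ t) *ᵥ r) s)
      atTop (𝓝 (u s))) (s : S) : c ≤ u s := by
  have hL : Tendsto (fun n : ℕ => c + (1 / (n : ℝ)) * (v s - ((P ^ n) *ᵥ v) s)) atTop (𝓝 c) := by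
    simpa using tendsto_const_nhds.add (tendsto_frac_zero h v s)
  refine le_of_tendsto_of_tendsto hL (hu s) ?_
  filter_upwards [eventually_ge_atTop 1] with n hn
  have hkey := key_sum_lower h hle n s
  have hn0 : (0:ℝ) < n := by exact_mod_cast hn
  have := mul_le_mul_of_nonneg_left hkey (le_of_lt (by positivity : (0:ℝ) < 1 / n))
  calc c + (1 / (n : ℝ)) * (v s - ((P ^ n) *ᵥ v) s)
      = (1 / (n : ℝ)) * ((n : ℝ) * c + (v s - ((P ^ n) *ᵥ v) s)) := by
        rw [mul_add, ← mul_assoc, one_div, inv_mul_cancel₀ (ne_of_gt hn0), one_mul]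
    _ ≤ _ := this

lemma cesaro_upper {P : Matrix S S ℝ} (h : StochMat P) {r v : S → ℝ} {C : ℝ} {u : S → ℝ}
    (hle : ∀ s, r s ≤ C + (v s - (P *ᵥ v) s))
    (hu : ∀ s, Tendsto (fun n : ℕ => (1 / (n : ℝ)) * ∑ t ∈ Finset.range n, ((P ^ t) *ᵥ r) s)
      atTop (𝓝 (u s))) (s : S) : u s ≤ C := by
  have hneg : ∀ s, (-C) + ((-v) s - (P *ᵥ (-v)) s) ≤ (-r) s := by
    intro s
    simp only [Pi.neg_apply, Matrix.mulVec_neg]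
    linarith [hle s]
  have hun : ∀ s, Tendsto (fun n : ℕ => (1 / (n : ℝ)) *
      ∑ t ∈ Finset.range n, ((P ^ t) *ᵥ (-r)) s) atTop (𝓝 (-(u s))) := by
    intro s
    have := (hu s).neg
    refine this.congr fun n => ?_
    simp [Matrix.mulVec_neg, Finset.sum_neg_distrib, mul_neg]
  have := cesaro_lower h hneg hun s
  linarith

end Stoch

section MDPLemmas
variable [Nonempty A]

lemma MDP.stoch_Pmat (M : MDP S A R) {π : S → A → ℝ} (hπ : IsPolicy π) : StochMat (M.Pmat π) := by
  constructor
  · intro s s'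
    exact Finset.sum_nonneg fun a _ => Finset.sum_nonneg fun r _ =>
      mul_nonneg (hπ.1 s a) (M.p_nonneg s a s' r)
  · intro s
    simp only [MDP.Pmat, Matrix.of_apply]
    rw [Finset.sum_comm]
    have : ∀ a ∈ Finset.univ, ∑ s' : S, ∑ r : R, π s a * M.p s a s' r = π s a := by
      intro a _
      simp only [← Finset.mul_sum]
      rw [M.p_sum_one s a, mul_one]
    rw [Finset.sum_congr rfl this, hπ.2 s]

/-- key identity: `r_π(s) + (P_π v)(s) = Σ_a π(s,a) T(Q)(s,a)` where `v = max_a Q`. -/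
lemma MDP.rPi_add_Pv (M : MDP S A R) (π : S → A → ℝ) (Q : S × A → ℝ) (s : S) :
    M.rPi π s + (M.Pmat π *ᵥ (fun s' => ⨆ a' : A, Q (s', a'))) s
      = ∑ a : A, π s a * M.T Q (s, a) := by
  set v : S → ℝ := fun s' => ⨆ a' : A, Q (s', a') with hv
  have hT : ∀ a : A, M.T Q (s, a) = (∑ s' : S, ∑ r : R, M.p s a s' r * M.rval r)
      + (∑ s' : S, ∑ r : R, M.p s a s' r * v s') := by
    intro a
    simp only [MDP.T, mul_add, Finset.sum_add_distrib, hv]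
  have h1 : M.rPi π s = ∑ a : A, π s a * (∑ s' : S, ∑ r : R, M.p s a s' r * M.rval r) := by
    simp only [MDP.rPi, Finset.mul_sum, mul_assoc]
  have h2 : (M.Pmat π *ᵥ v) s = ∑ a : A, π s a * (∑ s' : S, ∑ r : R, M.p s a s' r * v s') := by
    simp only [Matrix.mulVec, dotProduct, MDP.Pmat, Matrix.of_apply,
      Finset.sum_mul, Finset.mul_sum, mul_assoc]
    rw [Finset.sum_comm]
  rw [h1, h2, ← Finset.sum_add_distrib]
  exact Finset.sum_congr rfl fun a _ => by rw [hT a, mul_add]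

lemma convex_lower {π : S → A → ℝ} (hπ : IsPolicy π) (s : S) {x : A → ℝ} {m : ℝ}
    (hm : ∀ a, m ≤ x a) : m ≤ ∑ a : A, π s a * x a := by
  calc m = ∑ a : A, π s a * m := by rw [← Finset.sum_mul, hπ.2 s, one_mul]
    _ ≤ _ := Finset.sum_le_sum fun a _ => mul_le_mul_of_nonneg_left (hm a) (hπ.1 s a)

lemma convex_upper {π : S → A → ℝ} (hπ : IsPolicy π) (s : S) {x : A → ℝ} {C : ℝ}
    (hC : ∀ a, x a ≤ C) : ∑ a : A, π s a * x a ≤ C := by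
  calc ∑ a : A, π s a * x a ≤ ∑ a : A, π s a * C :=
      Finset.sum_le_sum fun a _ => mul_le_mul_of_nonneg_left (hC a) (hπ.1 s a)
    _ = C := by rw [← Finset.sum_mul, hπ.2 s, one_mul]

/-- reward rate equals the Cesàro limit, which exists. -/
lemma MDP.rewardRate_spec (M : MDP S A R) {π : S → A → ℝ} (hπ : IsPolicy π) :
    ∀ s : S, Tendsto (fun n : ℕ => (1 / (n : ℝ)) *
      ∑ t ∈ Finset.range n, ((M.Pmat π ^ t) *ᵥ M.rPi π) s) atTop (𝓝 (M.rewardRate π s)) := by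
  obtain ⟨u, hu⟩ := cesaro_exists (M.stoch_Pmat hπ) (M.rPi π)
  intro s
  have : M.rewardRate π s = u s := (hu s).limUnder_eq
  rw [this]; exact hu s

/-- any policy's reward rate is at most `max (T Q − Q)`. -/
lemma MDP.rate_le_sup (M : MDP S A R) (Q : S × A → ℝ) {π : S → A → ℝ} (hπ : IsPolicy π)
    (s : S) : M.rewardRate π s ≤ ⨆ sa : S × A, (M.T Q sa - Q sa) := by
  set v : S → ℝ := fun s' => ⨆ a' : A, Q (s', a') with hv
  set C : ℝ := ⨆ sa : S × A, (M.T Q sa - Q sa) with hC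
  have hQv : ∀ s' a', Q (s', a') ≤ v s' := by
    intro s' a'
    simp only [hv]
    exact le_ciSup (Set.Finite.bddAbove (Set.finite_range fun a' : A => Q (s', a'))) a'
  have hkey : ∀ s', M.rPi π s' ≤ C + (v s' - (M.Pmat π *ᵥ v) s') := by
    intro s'
    have hid := M.rPi_add_Pv π Q s'
    have h1 : ∑ a : A, π s' a * M.T Q (s', a) ≤ C + v s' := by
      have : ∀ a : A, π s' a * M.T Q (s', a)
          ≤ π s' a * (M.T Q (s', a) - Q (s', a)) + π s' a * Q (s', a) := by
        intro a; ring_nf; exact le_refl _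
      calc ∑ a : A, π s' a * M.T Q (s', a)
          = ∑ a : A, (π s' a * (M.T Q (s', a) - Q (s', a)) + π s' a * Q (s', a)) := by
            apply Finset.sum_congr rfl; intro a _; ring
        _ = (∑ a : A, π s' a * (M.T Q (s', a) - Q (s', a))) + ∑ a : A, π s' a * Q (s', a) :=
            Finset.sum_add_distrib
        _ ≤ C + v s' := by
            apply add_le_add
            · refine convex_upper hπ s' fun a => ?_
              rw [hC]
              exact le_ciSup (Set.Finite.bddAbove (Set.finite_range
                fun sa : S × A => M.T Q sa - Q sa)) ((s', a) : S × A)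
            · exact convex_upper hπ s' fun a => hQv s' a
    linarith [hid]
  exact cesaro_upper (M.stoch_Pmat hπ) hkey (M.rewardRate_spec hπ) s

/-- a greedy policy's reward rate is at least `min (T Q − Q)`. -/
lemma MDP.inf_le_rate (M : MDP S A R) (Q : S × A → ℝ) {π : S → A → ℝ} (hg : IsGreedy Q π)
    (s : S) : (⨅ sa : S × A, (M.T Q sa - Q sa)) ≤ M.rewardRate π s := by
  obtain ⟨hπ, hgr⟩ := hg
  set v : S → ℝ := fun s' => ⨆ a' : A, Q (s', a') with hv
  set c : ℝ := ⨅ sa : S × A, (M.T Q sa - Q sa) with hc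
  have hQv : ∀ s' a', Q (s', a') ≤ v s' := by
    intro s' a'
    simp only [hv]
    exact le_ciSup (Set.Finite.bddAbove (Set.finite_range fun a' : A => Q (s', a'))) a'
  have hgre : ∀ s', ∑ a : A, π s' a * Q (s', a) = v s' := by
    intro s'
    have : ∀ a ∈ Finset.univ, π s' a * Q (s', a) = π s' a * v s' := by
      intro a _
      rcases eq_or_lt_of_le (hπ.1 s' a) with h0 | h0
      · rw [← h0, zero_mul, zero_mul]
      · congr 1
        refine le_antisymm (hQv s' a) (ciSup_le fun a' => hgr s' a h0 a')
    rw [Finset.sum_congr rfl this, ← Finset.sum_mul, hπ.2 s', one_mul]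
  have hkey : ∀ s', c + (v s' - (M.Pmat π *ᵥ v) s') ≤ M.rPi π s' := by
    intro s'
    have hid := M.rPi_add_Pv π Q s'
    have h1 : c + v s' ≤ ∑ a : A, π s' a * M.T Q (s', a) := by
      calc c + v s'
          = (c : ℝ) + ∑ a : A, π s' a * Q (s', a) := by rw [hgre s']
        _ ≤ (∑ a : A, π s' a * (M.T Q (s', a) - Q (s', a))) + ∑ a : A, π s' a * Q (s', a) := by
            apply add_le_add_left
            refine convex_lower hπ s' fun a => ?_
            rw [hc]
            exact ciInf_le (Set.Finite.bddBelow (Set.finite_range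
              fun sa : S × A => M.T Q sa - Q sa)) ((s', a) : S × A)
        _ = ∑ a : A, π s' a * M.T Q (s', a) := by
            rw [← Finset.sum_add_distrib]
            apply Finset.sum_congr rfl; intro a _; ring
    linarith [hid]
  exact cesaro_lower (M.stoch_Pmat hπ) hkey (M.rewardRate_spec hπ) s

end MDPLemmas

section Part2
variable [Nonempty A]

lemma MDP.TQ_sub_of_bellman (M : MDP S A R) {q : S × A → ℝ} {c : ℝ}
    (h : M.BellmanOpt q c) (sa : S × A) : M.T q sa - q sa = c := by
  obtain ⟨s, a⟩ := sa
  rw [h s a]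
  simp only [MDP.T]
  rw [← Finset.sum_sub_distrib]
  have h1 : ∀ s' ∈ Finset.univ, (∑ r : R, M.p s a s' r * (M.rval r + ⨆ a' : A, q (s', a')))
      - (∑ r : R, M.p s a s' r * (M.rval r - c + ⨆ a' : A, q (s', a')))
      = ∑ r : R, M.p s a s' r * c := by
    intro s' _
    rw [← Finset.sum_sub_distrib]
    exact Finset.sum_congr rfl fun r _ => by ring
  rw [Finset.sum_congr rfl h1]
  simp only [← Finset.sum_mul]
  rw [M.p_sum_one s a, one_mul]

lemma ciSup_diff_le {Q q : S × A → ℝ} {d : ℝ} (hd : ∀ sa, |Q sa - q sa| ≤ d) (s' : S) :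
    |(⨆ a' : A, Q (s', a')) - ⨆ a' : A, q (s', a')| ≤ d := by
  have hb : ∀ (f : S × A → ℝ) (s' : S), BddAbove (Set.range fun a' : A => f (s', a')) :=
    fun f s' => Set.Finite.bddAbove (Set.finite_range _)
  rw [abs_le]
  constructor
  · rw [neg_le, neg_sub]
    rw [sub_le_iff_le_add]
    refine ciSup_le fun a' => ?_
    have := abs_le.mp (hd (s', a'))
    calc q (s', a') ≤ Q (s', a') + d := by linarith [this.1]
      _ ≤ (⨆ a' : A, Q (s', a')) + d := add_le_add_left (le_ciSup (hb Q s') a') d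
      _ ≤ d + ⨆ a' : A, Q (s', a') := le_of_eq (add_comm _ _)
  · rw [sub_le_iff_le_add]
    refine ciSup_le fun a' => ?_
    have := abs_le.mp (hd (s', a'))
    calc Q (s', a') ≤ q (s', a') + d := by linarith [this.2]
      _ ≤ (⨆ a' : A, q (s', a')) + d := add_le_add_left (le_ciSup (hb q s') a') d
      _ ≤ d + ⨆ a' : A, q (s', a') := le_of_eq (add_comm _ _)

lemma MDP.T_diff_le (M : MDP S A R) {Q q : S × A → ℝ} {d : ℝ}
    (hd : ∀ sa, |Q sa - q sa| ≤ d) (sa : S × A) : |M.T Q sa - M.T q sa| ≤ d := by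
  obtain ⟨s, a⟩ := sa
  simp only [MDP.T]
  have key : (∑ s' : S, ∑ r : R, M.p s a s' r * (M.rval r + ⨆ a' : A, Q (s', a')))
      - (∑ s' : S, ∑ r : R, M.p s a s' r * (M.rval r + ⨆ a' : A, q (s', a')))
      = ∑ s' : S, ∑ r : R, M.p s a s' r *
          ((⨆ a' : A, Q (s', a')) - ⨆ a' : A, q (s', a')) := by
    rw [← Finset.sum_sub_distrib]
    refine Finset.sum_congr rfl fun s' _ => ?_
    rw [← Finset.sum_sub_distrib]
    exact Finset.sum_congr rfl fun r _ => by ring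
  rw [key]
  calc |∑ s' : S, ∑ r : R, M.p s a s' r * ((⨆ a' : A, Q (s', a')) - ⨆ a' : A, q (s', a'))|
      ≤ ∑ s' : S, |∑ r : R, M.p s a s' r * ((⨆ a' : A, Q (s', a')) - ⨆ a' : A, q (s', a'))| :=
        Finset.abs_sum_le_sum_abs _ _
    _ ≤ ∑ s' : S, ∑ r : R, |M.p s a s' r * ((⨆ a' : A, Q (s', a')) - ⨆ a' : A, q (s', a'))| :=
        Finset.sum_le_sum fun s' _ => Finset.abs_sum_le_sum_abs _ _
    _ ≤ ∑ s' : S, ∑ r : R, M.p s a s' r * d := by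
        refine Finset.sum_le_sum fun s' _ => Finset.sum_le_sum fun r _ => ?_
        rw [abs_mul, abs_of_nonneg (M.p_nonneg s a s' r)]
        exact mul_le_mul_of_nonneg_left (ciSup_diff_le hd s') (M.p_nonneg s a s' r)
    _ = d := by simp only [← Finset.sum_mul]; rw [M.p_sum_one s a, one_mul]

end Part2

/-- For any `Q` and any greedy policy `π` w.r.t. `Q`, for every state `s`:
`min (T(Q) − Q) ≤ r(π,s) ≤ r* ≤ max (T(Q) − Q)`, hence `|r* − r(π,s)| ≤ sp(T(Q) − Q)`.
Consequently, if `Q_t → q_∞` with `q_∞ = T(q_∞) − r*·e` and `π_t` is greedy w.r.t. `Q_t`,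
then `r(π_t, s) → r*` for every `s`. -/
theorem greedy_reward_rate_bounds_and_convergence [Nonempty S] [Nonempty A]
    (M : MDP S A R) (hcomm : M.Communicating) :
    (∀ (Q : S × A → ℝ) (π : S → A → ℝ), IsGreedy Q π → ∀ s : S,
      ((⨅ sa : S × A, (M.T Q sa - Q sa)) ≤ M.rewardRate π s ∧
        M.rewardRate π s ≤ M.rStar ∧
        M.rStar ≤ ⨆ sa : S × A, (M.T Q sa - Q sa)) ∧
      |M.rStar - M.rewardRate π s| ≤
        (⨆ sa : S × A, (M.T Q sa - Q sa)) - ⨅ sa : S × A, (M.T Q sa - Q sa)) ∧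
    (∀ (Qt : ℕ → S × A → ℝ) (qinf : S × A → ℝ) (πt : ℕ → S → A → ℝ),
      Tendsto Qt atTop (𝓝 qinf) →
      M.BellmanOpt qinf M.rStar →
      (∀ t, IsGreedy (Qt t) (πt t)) →
      ∀ s : S, Tendsto (fun t => M.rewardRate (πt t) s) atTop (𝓝 M.rStar)) := by
  
  classical
  have part1 : ∀ (Q : S × A → ℝ) (π : S → A → ℝ), IsGreedy Q π → ∀ s : S,
      ((⨅ sa : S × A, (M.T Q sa - Q sa)) ≤ M.rewardRate π s ∧
        M.rewardRate π s ≤ M.rStar ∧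
        M.rStar ≤ ⨆ sa : S × A, (M.T Q sa - Q sa)) ∧
      |M.rStar - M.rewardRate π s| ≤
        (⨆ sa : S × A, (M.T Q sa - Q sa)) - ⨅ sa : S × A, (M.T Q sa - Q sa) := by
    intro Q π hg s
    have hbdd : BddAbove {x : ℝ | ∃ π' : S → A → ℝ, ∃ s' : S, IsPolicy π' ∧
        x = M.rewardRate π' s'} := by
      refine ⟨⨆ sa : S × A, (M.T Q sa - Q sa), ?_⟩
      rintro x ⟨π', s', hπ', rfl⟩
      exact M.rate_le_sup Q hπ' s'
    have hne : {x : ℝ | ∃ π' : S → A → ℝ, ∃ s' : S, IsPolicy π' ∧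
        x = M.rewardRate π' s'}.Nonempty := ⟨M.rewardRate π s, π, s, hg.1, rfl⟩
    have h1 := M.inf_le_rate Q hg s
    have h2 : M.rewardRate π s ≤ M.rStar := by
      rw [MDP.rStar]
      exact le_csSup hbdd ⟨π, s, hg.1, rfl⟩
    have h3 : M.rStar ≤ ⨆ sa : S × A, (M.T Q sa - Q sa) := by
      rw [MDP.rStar]
      refine csSup_le hne ?_
      rintro x ⟨π', s', hπ', rfl⟩
      exact M.rate_le_sup Q hπ' s'
    refine ⟨⟨h1, h2, h3⟩, ?_⟩
    rw [abs_of_nonneg (by linarith)]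
    linarith
  refine ⟨part1, ?_⟩
  intro Qt qinf πt hQ hbell hgr s
  have hd0 : Tendsto (fun t => dist (Qt t) qinf) atTop (𝓝 0) :=
    tendsto_iff_dist_tendsto_zero.mp hQ
  have hbound : ∀ t, |M.rewardRate (πt t) s - M.rStar| ≤ 4 * dist (Qt t) qinf := by
    intro t
    set d : ℝ := dist (Qt t) qinf with hdd
    have hdist : ∀ sa, |Qt t sa - qinf sa| ≤ d := by
      intro sa
      rw [← Real.dist_eq]
      exact dist_le_pi_dist _ _ sa
    have hTd := M.T_diff_le hdist
    have hsa : ∀ sa : S × A, |(M.T (Qt t) sa - Qt t sa) - M.rStar| ≤ 2 * d := by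
      intro sa
      have hb := M.TQ_sub_of_bellman hbell sa
      calc |(M.T (Qt t) sa - Qt t sa) - M.rStar|
          = |(M.T (Qt t) sa - M.T qinf sa) - (Qt t sa - qinf sa)| := by rw [← hb]; ring_nf
        _ ≤ |M.T (Qt t) sa - M.T qinf sa| + |Qt t sa - qinf sa| := abs_sub _ _
        _ ≤ d + d := add_le_add (hTd sa) (hdist sa)
        _ = 2 * d := by ring
    have hsup : (⨆ sa : S × A, (M.T (Qt t) sa - Qt t sa)) ≤ M.rStar + 2 * d :=
      ciSup_le fun sa => by linarith [(abs_le.mp (hsa sa)).2]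
    have hinf : M.rStar - 2 * d ≤ ⨅ sa : S × A, (M.T (Qt t) sa - Qt t sa) :=
      le_ciInf fun sa => by linarith [(abs_le.mp (hsa sa)).1]
    have := (part1 (Qt t) (πt t) (hgr t) s).2
    rw [abs_sub_comm]
    linarith
  have hto : Tendsto (fun t => M.rewardRate (πt t) s - M.rStar) atTop (𝓝 0) := by
    apply squeeze_zero_norm (a := fun t => 4 * dist (Qt t) qinf) hbound
    simpa using hd0.const_mul (4:ℝ)
  exact tendsto_sub_nhds_zero_iff.mp hto
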